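/- Let S be a commutative ring and w ∈ S. Let (C_i)_{i∈ℤ} and (C'_i)_{i∈ℤ} be families of S-modules equipped with S-linear maps d : C_i → C_{i+1}, e : C_i → C_{i−1}, d' : C'_i → C'_{i+1}, e' : C'_i → C'_{i−1} satisfying on each graded piece: d∘d = 0, e∘e = 0, d∘e + e∘d = w·id, and likewise d'∘d' = 0, e'∘e' = 0, d'∘e' + e'∘d' = w·id. Assume the following null-homotopy hypothesis: for every k ≥ 1, every degree (1−2k) map θ (a family θ : C_i → C'_{i+1−2k}) satisfying d'∘θ + θ∘d = 0 can be written as θ = d'∘h − h∘d for some degree (−2k) map h : C_i → C'_{i−2k}. Then every degree-0 chain map φ₀ : C → C' (i.e. d'∘φ₀ = φ₀∘d) extends to a morphism of the curved deformations: there exist degree (−2m) maps φ_m : C_i → C'_{i−2m} for all m ≥ 1 such that d'∘φ_m − φ_m∘d + e'∘φ_{m−1} − φ_{m−1}∘e = 0 for every m ≥ 1 (equivalently, φ = Σ_{m≥0} φ_m u^m satisfies (d' + u e')∘φ = φ∘(d + u e)). -/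
import Mathlib


/-- The inductive construction extending a degree-zero chain map `φ₀` between complexes
to a morphism of curved deformations, under the hypothesis that every odd-degree chain map
between the two complexes is null-homotopic. -/
lemma aux_chain {S : Type*} [CommRing S] {M M' : Type*} [AddCommGroup M] [Module S M]
    [AddCommGroup M'] [Module S M'] (w : S) (d e : M →ₗ[S] M) (d' e' : M' →ₗ[S] M')
    (hde : d ∘ₗ e + e ∘ₗ d = w • LinearMap.id)
    (hde' : d' ∘ₗ e' + e' ∘ₗ d' = w • LinearMap.id)
    (g ψ : M →ₗ[S] M') (hψ : d' ∘ₗ g - g ∘ₗ d = ψ)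
    (hinv : e' ∘ₗ ψ + ψ ∘ₗ e = 0) :
    d' ∘ₗ (g ∘ₗ e - e' ∘ₗ g) + (g ∘ₗ e - e' ∘ₗ g) ∘ₗ d = 0 := by
  ext x
  have H1 : ∀ y : M, d' (g y) = g (d y) + ψ y := by
    intro y
    have h := LinearMap.congr_fun hψ y
    simp only [LinearMap.sub_apply, LinearMap.comp_apply] at h
    exact eq_add_of_sub_eq' h
  have H2 : g (d x) = d' (g x) - ψ x := eq_sub_of_add_eq (H1 x).symm
  have Hde : d (e x) + e (d x) = w • x := by
    have h := LinearMap.congr_fun hde x; simpa using h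
  have Hde' : d' (e' (g x)) + e' (d' (g x)) = w • (g x) := by
    have h := LinearMap.congr_fun hde' (g x); simpa using h
  have Hinv : e' (ψ x) + ψ (e x) = 0 := by
    have h := LinearMap.congr_fun hinv x; simpa using h
  simp only [LinearMap.add_apply, LinearMap.comp_apply, LinearMap.sub_apply, map_sub,
    LinearMap.zero_apply]
  rw [H1 (e x), H2, map_sub]
  have Hg : g (d (e x)) + g (e (d x)) = w • g x := by rw [← map_add, Hde, map_smul]
  have key : g (d (e x)) + ψ (e x) - d' (e' (g x)) + (g (e (d x)) - (e' (d' (g x)) - e' (ψ x)))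
      = (g (d (e x)) + g (e (d x))) - (d' (e' (g x)) + e' (d' (g x))) + (e' (ψ x) + ψ (e x)) := by
    abel
  rw [key, Hg, Hde', Hinv]
  abel


theorem chain_map_extends_to_curved_deformations
    {S : Type*} [CommRing S] (w : S)
    {M M' : Type*} [AddCommGroup M] [Module S M] [AddCommGroup M'] [Module S M']
    (C : ℤ → Submodule S M) (C' : ℤ → Submodule S M')
    (hC : DirectSum.IsInternal C) (hC' : DirectSum.IsInternal C')
    (d e : M →ₗ[S] M) (d' e' : M' →ₗ[S] M')
    (hdC : ∀ i : ℤ, ∀ x ∈ C i, d x ∈ C (i + 1))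
    (heC : ∀ i : ℤ, ∀ x ∈ C i, e x ∈ C (i - 1))
    (hdC' : ∀ i : ℤ, ∀ x ∈ C' i, d' x ∈ C' (i + 1))
    (heC' : ∀ i : ℤ, ∀ x ∈ C' i, e' x ∈ C' (i - 1))
    (hd2 : d ∘ₗ d = 0) (he2 : e ∘ₗ e = 0)
    (hde : d ∘ₗ e + e ∘ₗ d = w • LinearMap.id)
    (hd2' : d' ∘ₗ d' = 0) (he2' : e' ∘ₗ e' = 0)
    (hde' : d' ∘ₗ e' + e' ∘ₗ d' = w • LinearMap.id)
    (hnull : ∀ k : ℕ, 1 ≤ k → ∀ θ : M →ₗ[S] M',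
      (∀ i : ℤ, ∀ x ∈ C i, θ x ∈ C' (i + 1 - 2 * (k : ℤ))) →
      d' ∘ₗ θ + θ ∘ₗ d = 0 →
      ∃ h : M →ₗ[S] M',
        (∀ i : ℤ, ∀ x ∈ C i, h x ∈ C' (i - 2 * (k : ℤ))) ∧ θ = d' ∘ₗ h - h ∘ₗ d)
    (φ₀ : M →ₗ[S] M')
    (hφ₀deg : ∀ i : ℤ, ∀ x ∈ C i, φ₀ x ∈ C' i)
    (hφ₀ : d' ∘ₗ φ₀ = φ₀ ∘ₗ d) :
    ∃ φ : ℕ → (M →ₗ[S] M'),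
      φ 0 = φ₀ ∧
      (∀ (m : ℕ) (i : ℤ), ∀ x ∈ C i, φ m x ∈ C' (i - 2 * (m : ℤ))) ∧
      (∀ m : ℕ, 1 ≤ m →
        d' ∘ₗ φ m - φ m ∘ₗ d + e' ∘ₗ φ (m - 1) - φ (m - 1) ∘ₗ e = 0) := by
  classical
  -- degree of the homotopy candidate θ = g∘e - e'∘g
  have keydeg : ∀ (k : ℕ) (g : M →ₗ[S] M'),
      (∀ i : ℤ, ∀ x ∈ C i, g x ∈ C' (i - 2 * (k : ℤ))) →
      ∀ i : ℤ, ∀ x ∈ C i, (g ∘ₗ e - e' ∘ₗ g) x ∈ C' (i + 1 - 2 * ((k + 1 : ℕ) : ℤ)) := by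
    intro k g hg i x hx
    have h1 : g (e x) ∈ C' (i - 1 - 2 * (k : ℤ)) := hg (i - 1) _ (heC i x hx)
    have h2 : e' (g x) ∈ C' (i - 2 * (k : ℤ) - 1) := heC' _ _ (hg i x hx)
    have e1 : i - 1 - 2 * (k : ℤ) = i + 1 - 2 * ((k + 1 : ℕ) : ℤ) := by push_cast; ring
    have e2 : i - 2 * (k : ℤ) - 1 = i + 1 - 2 * ((k + 1 : ℕ) : ℤ) := by push_cast; ring
    rw [e1] at h1; rw [e2] at h2
    simpa only [LinearMap.sub_apply, LinearMap.comp_apply] using sub_mem h1 h2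
  have hdeg0 : ∀ i : ℤ, ∀ x ∈ C i, φ₀ x ∈ C' (i - 2 * ((0 : ℕ) : ℤ)) := by
    intro i x hx; simpa using hφ₀deg i x hx
  -- base: construct φ₁
  have base : ∃ g : M →ₗ[S] M',
      (∀ i : ℤ, ∀ x ∈ C i, g x ∈ C' (i - 2 * ((1 : ℕ) : ℤ))) ∧
      d' ∘ₗ g - g ∘ₗ d + e' ∘ₗ φ₀ - φ₀ ∘ₗ e = 0 := by
    have hψ : d' ∘ₗ φ₀ - φ₀ ∘ₗ d = (0 : M →ₗ[S] M') := sub_eq_zero.mpr hφ₀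
    have hinv : e' ∘ₗ (0 : M →ₗ[S] M') + (0 : M →ₗ[S] M') ∘ₗ e = 0 := by simp
    have hchain := aux_chain w d e d' e' hde hde' φ₀ 0 hψ hinv
    obtain ⟨h, hdeg, heq⟩ := hnull 1 le_rfl (φ₀ ∘ₗ e - e' ∘ₗ φ₀)
      (keydeg 0 φ₀ hdeg0) hchain
    refine ⟨h, hdeg, ?_⟩
    rw [← heq]; abel
  -- inductive step
  have step : ∀ m : ℕ, ∀ f g : M →ₗ[S] M',
      (∀ i : ℤ, ∀ x ∈ C i, f x ∈ C' (i - 2 * (m : ℤ))) →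
      (∀ i : ℤ, ∀ x ∈ C i, g x ∈ C' (i - 2 * ((m + 1 : ℕ) : ℤ))) →
      d' ∘ₗ g - g ∘ₗ d + e' ∘ₗ f - f ∘ₗ e = 0 →
      ∃ h : M →ₗ[S] M',
        (∀ i : ℤ, ∀ x ∈ C i, h x ∈ C' (i - 2 * ((m + 2 : ℕ) : ℤ))) ∧
        d' ∘ₗ h - h ∘ₗ d + e' ∘ₗ g - g ∘ₗ e = 0 := by
    intro m f g hf hg hlink
    have hψ : d' ∘ₗ g - g ∘ₗ d = f ∘ₗ e - e' ∘ₗ f := by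
      rw [← sub_eq_zero, ← hlink]; abel
    have hinv : e' ∘ₗ (f ∘ₗ e - e' ∘ₗ f) + (f ∘ₗ e - e' ∘ₗ f) ∘ₗ e = 0 := by
      ext x
      have h1 : e (e x) = 0 := by have := LinearMap.congr_fun he2 x; simpa using this
      have h2 : e' (e' (f x)) = 0 := by
        have := LinearMap.congr_fun he2' (f x); simpa using this
      simp only [LinearMap.add_apply, LinearMap.comp_apply, LinearMap.sub_apply, map_sub,
        LinearMap.zero_apply, h1, h2, map_zero]
      abel
    have hchain := aux_chain w d e d' e' hde hde' g (f ∘ₗ e - e' ∘ₗ f) hψ hinv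
    obtain ⟨h, hdeg, heq⟩ := hnull (m + 2) (by omega) (g ∘ₗ e - e' ∘ₗ g)
      (keydeg (m + 1) g hg) hchain
    refine ⟨h, hdeg, ?_⟩
    rw [← heq]; abel
  -- build the sequence by recursion
  let P : ℕ → ((M →ₗ[S] M') × (M →ₗ[S] M')) → Prop := fun m p =>
    (∀ i : ℤ, ∀ x ∈ C i, p.1 x ∈ C' (i - 2 * (m : ℤ))) ∧
    (∀ i : ℤ, ∀ x ∈ C i, p.2 x ∈ C' (i - 2 * ((m + 1 : ℕ) : ℤ))) ∧
    d' ∘ₗ p.2 - p.2 ∘ₗ d + e' ∘ₗ p.1 - p.1 ∘ₗ e = 0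
  let F : ∀ m : ℕ, { p : (M →ₗ[S] M') × (M →ₗ[S] M') // P m p } := fun m =>
    Nat.rec
      ⟨(φ₀, base.choose), hdeg0, base.choose_spec.1, base.choose_spec.2⟩
      (fun n ih =>
        ⟨(ih.1.2, (step n ih.1.1 ih.1.2 ih.2.1 ih.2.2.1 ih.2.2.2).choose),
          ih.2.2.1,
          (step n ih.1.1 ih.1.2 ih.2.1 ih.2.2.1 ih.2.2.2).choose_spec.1,
          (step n ih.1.1 ih.1.2 ih.2.1 ih.2.2.1 ih.2.2.2).choose_spec.2⟩) m
  refine ⟨fun m => (F m).1.1, rfl, ?_, ?_⟩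
  · intro m i x hx
    exact (F m).2.1 i x hx
  · intro m hm
    obtain ⟨n, rfl⟩ : ∃ n, m = n + 1 := ⟨m - 1, by omega⟩
    have hlink := (F n).2.2.2
    have h1 : (F (n + 1)).1.1 = (F n).1.2 := rfl
    have h2 : n + 1 - 1 = n := by omega
    rw [h2]
    show d' ∘ₗ (F (n + 1)).1.1 - (F (n + 1)).1.1 ∘ₗ d + e' ∘ₗ (F n).1.1 - (F n).1.1 ∘ₗ e = 0
    rw [h1]
    exact hlink
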